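/- If two unit-speed Frenet curves α, β with nonvanishing torsions satisfy n₂^α(s_α(s_β)) = n₂^β(s_β) for all s_β under a reparametrization s_α(s_β) with ds_α/ds_β = r_β/r_α > 0, then also n₁^α(s_α(s_β)) = n₁^β(s_β) and t^α(s_α(s_β)) = t^β(s_β); i.e., equality of binormals under this transformation implies the curves are similar curves. -/
import Mathlib


/-- If two unit-speed Frenet curves α, β with nonvanishing torsions
satisfy n₂^α∘s_α = n₂^β under a reparametrization with ds_α/ds_β = r_β/r_α > 0,
then also n₁^α∘s_α = n₁^β and t^α∘s_α = t^β. -/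
theorem stmt_13 (tα n₁α n₂α tβ n₁β n₂β : ℝ → (Fin 3 → ℝ))
    (kα rα kβ rβ : ℝ → ℝ)
    (hkα : ∀ s, 0 < kα s) (hkβ : ∀ s, 0 < kβ s)
    (hrα : ∀ s, rα s ≠ 0) (hrβ : ∀ s, rβ s ≠ 0)
    (hframeα : ∀ s, tα s = crossProduct (n₁α s) (n₂α s))
    (hframeβ : ∀ s, tβ s = crossProduct (n₁β s) (n₂β s))
    (hFtα : ∀ s, HasDerivAt tα (kα s • n₁α s) s)
    (hFn₁α : ∀ s, HasDerivAt n₁α (-(kα s) • tα s + rα s • n₂α s) s)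
    (hFn₂α : ∀ s, HasDerivAt n₂α (-(rα s) • n₁α s) s)
    (hFtβ : ∀ s, HasDerivAt tβ (kβ s • n₁β s) s)
    (hFn₁β : ∀ s, HasDerivAt n₁β (-(kβ s) • tβ s + rβ s • n₂β s) s)
    (hFn₂β : ∀ s, HasDerivAt n₂β (-(rβ s) • n₁β s) s)
    (sα : ℝ → ℝ) (hsα : ∀ s, HasDerivAt sα (rβ s / rα (sα s)) s)
    (hpos : ∀ s, 0 < rβ s / rα (sα s))
    (hbinormal : ∀ s, n₂α (sα s) = n₂β s) :
    (∀ s, n₁α (sα s) = n₁β s) ∧ (∀ s, tα (sα s) = tβ s) := by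
  have hn₁ : ∀ s, n₁α (sα s) = n₁β s := by
    intro s
    have h1 : HasDerivAt (fun x => n₂α (sα x))
        ((rβ s / rα (sα s)) • (-(rα (sα s)) • n₁α (sα s))) s :=
      (hFn₂α (sα s)).scomp s (hsα s)
    have heq : (fun x => n₂α (sα x)) = n₂β := funext hbinormal
    rw [heq] at h1
    have h2 := (hFn₂β s).unique h1
    have hne := hrβ s
    have : (-(rβ s)) • n₁β s = (-(rβ s)) • n₁α (sα s) := by
      rw [h2, smul_smul]
      congr 1
      field_simp [hrα (sα s)]
    exact smul_right_injective (Fin 3 → ℝ) (neg_ne_zero.mpr hne) this.symm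
  refine ⟨hn₁, fun s => ?_⟩
  rw [hframeα, hframeβ, hn₁ s, hbinormal s]
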